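/- Let X : Matrix (Fin d) (Fin d) ℂ be a unitary matrix and let Y be its n-fold Kronecker power, the matrix indexed by (Fin n → Fin d) with entries Y(j, l) = ∏_{i : Fin n} X(j i, l i). Then Y† · Π · Y = Π, where Π is the matrix of the symmetrizer and Y† the conjugate transpose of Y. -/
import Mathlib


/-- **Invariance of the symmetrizer under local unitaries.**
If `X : Matrix (Fin d) (Fin d) ℂ` is unitary and `Y` is its `n`-fold Kronecker power
`Y j l = ∏ i, X (j i) (l i)`, then `Y.conjTranspose * Pm * Y = Pm`, where `Pm` is the matrix of
the symmetrizer `Pm j l = (1/n!) · #{σ ∈ Perm (Fin n) | j = l ∘ σ}`. -/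
theorem kronecker_power_preserves_symmetrizer (n d : ℕ)
    (X : Matrix (Fin d) (Fin d) ℂ) (hX : X ∈ Matrix.unitaryGroup (Fin d) ℂ)
    (Y : Matrix (Fin n → Fin d) (Fin n → Fin d) ℂ)
    (hY : ∀ j l, Y j l = ∏ i, X (j i) (l i))
    (Pm : Matrix (Fin n → Fin d) (Fin n → Fin d) ℂ)
    (hPm : ∀ j l, Pm j l = ((1 / (Nat.factorial n : ℝ) : ℝ) : ℂ) *
      ((Finset.univ.filter (fun σ : Equiv.Perm (Fin n) => j = l ∘ σ)).card : ℂ)) :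
    Y.conjTranspose * Pm * Y = Pm := by
  classical
  have hXU : X.conjTranspose * X = 1 := by
    simpa [Matrix.star_eq_conjTranspose] using hX.1
  -- Y is unitary
  have hYU : Y.conjTranspose * Y = 1 := by
    ext j l
    rw [Matrix.mul_apply]
    have key : ∀ k : Fin n → Fin d,
        Y.conjTranspose j k * Y k l = ∏ i, (star (X (k i) (j i)) * X (k i) (l i)) := by
      intro k
      rw [Matrix.conjTranspose_apply, hY, hY, star_prod, ← Finset.prod_mul_distrib]
    simp_rw [key]
    have swap := Finset.prod_univ_sum (fun _ : Fin n => (Finset.univ : Finset (Fin d)))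
      (fun i a => star (X a (j i)) * X a (l i))
    rw [← Fintype.piFinset_univ, ← swap]
    have hfac : ∀ i : Fin n, (∑ a : Fin d, star (X a (j i)) * X a (l i))
        = (1 : Matrix (Fin d) (Fin d) ℂ) (j i) (l i) := by
      intro i
      rw [← hXU, Matrix.mul_apply]
      simp [Matrix.conjTranspose_apply]
    simp_rw [hfac]
    simp only [Matrix.one_apply]
    rw [Finset.prod_boole]
    by_cases h : j = l
    · simp [h]
    · have h2 : ¬ ∀ i ∈ Finset.univ, j i = l i := by
        intro hall
        exact h (funext fun i => hall i (Finset.mem_univ i))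
      simp only [if_neg h, if_neg h2]
  -- permutation matrices
  set P : Equiv.Perm (Fin n) → Matrix (Fin n → Fin d) (Fin n → Fin d) ℂ :=
    fun σ => Matrix.of fun j l => if j = l ∘ σ then (1 : ℂ) else 0 with hP
  have hPsum : Pm = ((Nat.factorial n : ℂ))⁻¹ • ∑ σ : Equiv.Perm (Fin n), P σ := by
    ext j l
    rw [hPm, Matrix.smul_apply, Matrix.sum_apply]
    have hs : ∑ σ : Equiv.Perm (Fin n), P σ j l
        = ((Finset.univ.filter (fun σ : Equiv.Perm (Fin n) => j = l ∘ σ)).card : ℂ) := by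
      simp [hP, Finset.sum_boole]
    rw [hs]
    push_cast
    rw [smul_eq_mul]
    ring
  have hcomm : ∀ σ : Equiv.Perm (Fin n), P σ * Y = Y * P σ := by
    intro σ
    ext a l
    rw [Matrix.mul_apply, Matrix.mul_apply]
    have hl : ∀ b : Fin n → Fin d, (a = b ∘ σ) ↔ (b = a ∘ ⇑σ⁻¹) := by
      intro b
      constructor
      · intro h; funext i; simp [h]
      · intro h; funext i; simp [h]
    have hL : ∑ b, P σ a b * Y b l = Y (a ∘ ⇑σ⁻¹) l := by
      calc ∑ b, P σ a b * Y b l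
          = ∑ b, (if b = a ∘ ⇑σ⁻¹ then (1:ℂ) else 0) * Y b l := by
            apply Finset.sum_congr rfl; intro b _
            simp only [hP, Matrix.of_apply]
            rw [if_congr (hl b) rfl rfl]
        _ = Y (a ∘ ⇑σ⁻¹) l := by simp
    have hR : ∑ b, Y a b * P σ b l = Y a (l ∘ σ) := by
      calc ∑ b, Y a b * P σ b l
          = ∑ b, Y a b * (if b = l ∘ σ then (1:ℂ) else 0) := rfl
        _ = Y a (l ∘ σ) := by simp
    rw [hL, hR, hY, hY]
    calc ∏ i, X ((a ∘ ⇑σ⁻¹) i) (l i)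
        = ∏ i, X ((a ∘ ⇑σ⁻¹) (σ i)) (l (σ i)) := (Equiv.prod_comp σ _).symm
      _ = ∏ i, X (a i) ((l ∘ σ) i) := by
          apply Finset.prod_congr rfl; intro i _; simp
  rw [hPsum, Matrix.mul_smul, Matrix.smul_mul, Matrix.mul_sum, Matrix.sum_mul]
  congr 1
  apply Finset.sum_congr rfl
  intro σ _
  rw [mul_assoc, hcomm σ, ← mul_assoc, hYU, one_mul]
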